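/- For every integer d ≥ 2, Σ_{q=2}^{d} e^{c·√q} / q^{3/4} < d^{1/4} · e^{c·√d}, where c = π·√(2/3). -/

import Mathlib

open Real Finset

private lemma c_ge_two : (2:ℝ) ≤ Real.pi * Real.sqrt (2 / 3) := by
  have h0 : (0:ℝ) ≤ Real.sqrt (2/3) := Real.sqrt_nonneg _
  have h1 : Real.sqrt (2/3) ^ 2 = 2/3 := Real.sq_sqrt (by norm_num)
  have h2 : (2/3 : ℝ) ≤ Real.sqrt (2/3) := by nlinarith
  nlinarith [Real.pi_gt_three]

private lemma key_step (x : ℝ) (hx : 2 ≤ x) :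
    x ^ ((1:ℝ)/4) * Real.exp (Real.pi * Real.sqrt (2 / 3) * Real.sqrt x)
      + Real.exp (Real.pi * Real.sqrt (2 / 3) * Real.sqrt (x + 1)) / (x + 1) ^ ((3:ℝ)/4)
    ≤ (x + 1) ^ ((1:ℝ)/4)
      * Real.exp (Real.pi * Real.sqrt (2 / 3) * Real.sqrt (x + 1)) := by
  set c : ℝ := Real.pi * Real.sqrt (2 / 3) with hc
  have hc2 : (2:ℝ) ≤ c := c_ge_two
  have hx0 : (0:ℝ) < x := by linarith
  have hx10 : (0:ℝ) < x + 1 := by linarith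
  set s := Real.sqrt x with hs
  set t := Real.sqrt (x + 1) with ht
  have hs0 : 0 < s := Real.sqrt_pos.mpr hx0
  have ht0 : 0 < t := Real.sqrt_pos.mpr hx10
  have hs2 : s ^ 2 = x := Real.sq_sqrt hx0.le
  have ht2 : t ^ 2 = x + 1 := Real.sq_sqrt hx10.le
  have hs1 : 1 ≤ s := by nlinarith
  have hts : s < t := by nlinarith
  have hu : 0 < t - s := by linarith
  -- main analytic inequality: 3/(4x) ≤ c*(t - s)
  have hmain : 3 / (4 * x) ≤ c * (t - s) := by
    have hprod : (t - s) * (t + s) = 1 := by nlinarith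
    have hts' : t ≤ (3/2) * s := by nlinarith
    have hu2 : 2 / (5 * s) ≤ t - s := by
      rw [div_le_iff₀ (by positivity)]
      nlinarith [mul_le_mul_of_nonneg_left hts' hu.le]
    rw [div_le_iff₀ (by positivity)]
    have h1 : 2 * (2 / (5 * s)) ≤ c * (t - s) :=
      mul_le_mul hc2 hu2 (by positivity) (by linarith)
    have h2 : 4 * x * (2 * (2 / (5 * s))) ≤ 4 * x * (c * (t - s)) :=
      mul_le_mul_of_nonneg_left h1 (by positivity)
    have h3 : 4 * x * (2 * (2 / (5 * s))) = 16 * s / 5 := by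
      rw [← hs2]; field_simp; ring
    nlinarith
  -- log inequality
  have hlog : Real.log ((x + 1) / x) ≤ 1 / x := by
    have h4 := Real.log_le_sub_one_of_pos (show (0:ℝ) < (x+1)/x by positivity)
    have h2 : (x + 1) / x - 1 = 1 / x := by field_simp; ring
    linarith [h2 ▸ h4]
  -- core: (x+1)^{3/4} * exp(c s) ≤ x^{3/4} * exp(c t)
  have hcore : (x + 1) ^ ((3:ℝ)/4) * Real.exp (c * s)
      ≤ x ^ ((3:ℝ)/4) * Real.exp (c * t) := by
    have hratio : ((x + 1) / x) ^ ((3:ℝ)/4) ≤ Real.exp (c * (t - s)) := by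
      rw [Real.rpow_def_of_pos (by positivity)]
      apply Real.exp_le_exp.mpr
      calc Real.log ((x+1)/x) * ((3:ℝ)/4) ≤ (1/x) * (3/4) := by
            apply mul_le_mul_of_nonneg_right hlog (by norm_num)
        _ = 3 / (4 * x) := by ring
        _ ≤ c * (t - s) := hmain
    have hdiv : ((x + 1) / x) ^ ((3:ℝ)/4) = (x+1) ^ ((3:ℝ)/4) / x ^ ((3:ℝ)/4) :=
      Real.div_rpow hx10.le hx0.le _
    have hxp : (0:ℝ) < x ^ ((3:ℝ)/4) := Real.rpow_pos_of_pos hx0 _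
    rw [hdiv, div_le_iff₀ hxp] at hratio
    calc (x + 1) ^ ((3:ℝ)/4) * Real.exp (c * s)
        ≤ Real.exp (c * (t - s)) * x ^ ((3:ℝ)/4) * Real.exp (c * s) := by
          apply mul_le_mul_of_nonneg_right hratio (Real.exp_pos _).le
      _ = x ^ ((3:ℝ)/4) * Real.exp (c * t) := by
          rw [mul_comm (Real.exp _), mul_assoc, ← Real.exp_add]
          ring_nf
  -- assemble
  have hxp14 : (0:ℝ) < x ^ ((1:ℝ)/4) := Real.rpow_pos_of_pos hx0 _
  have hy34 : (0:ℝ) < (x+1) ^ ((3:ℝ)/4) := Real.rpow_pos_of_pos hx10 _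
  have hx34 : x ^ ((1:ℝ)/4) * x ^ ((3:ℝ)/4) = x := by
    rw [← Real.rpow_add hx0]; norm_num
  have hy1 : (x+1) ^ ((1:ℝ)/4) * (x+1) ^ ((3:ℝ)/4) = x + 1 := by
    rw [← Real.rpow_add hx10]; norm_num
  set A := Real.exp (c * s) with hA
  set B := Real.exp (c * t) with hB
  have hB0 : 0 < B := Real.exp_pos _
  have hR : (x+1) ^ ((1:ℝ)/4) * B = (x+1) * B / (x+1) ^ ((3:ℝ)/4) := by
    rw [eq_div_iff hy34.ne', mul_right_comm, hy1]
  have hmid : x ^ ((1:ℝ)/4) * A ≤ x * B / (x+1) ^ ((3:ℝ)/4) := by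
    rw [le_div_iff₀ hy34]
    have h3 : x ^ ((1:ℝ)/4) * ((x + 1) ^ ((3:ℝ)/4) * A)
        ≤ x ^ ((1:ℝ)/4) * (x ^ ((3:ℝ)/4) * B) :=
      mul_le_mul_of_nonneg_left hcore hxp14.le
    nlinarith [h3]
  have hsplit : (x+1) * B / (x+1) ^ ((3:ℝ)/4)
      = x * B / (x+1) ^ ((3:ℝ)/4) + B / (x+1) ^ ((3:ℝ)/4) := by
    field_simp
  rw [hR, hsplit]
  linarith

/-- For every integer `d ≥ 2`,
`Σ_{q=2}^{d} e^{c·√q} / q^{3/4} < d^{1/4} · e^{c·√d}`, where `c = π·√(2/3)`. -/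
theorem sum_exp_sqrt_div_rpow_lt (d : ℕ) (hd : 2 ≤ d) :
    ∑ q ∈ Finset.Icc 2 d,
        Real.exp (Real.pi * Real.sqrt (2 / 3) * Real.sqrt (q : ℝ)) /
          (q : ℝ) ^ ((3 : ℝ) / 4)
      < (d : ℝ) ^ ((1 : ℝ) / 4) *
        Real.exp (Real.pi * Real.sqrt (2 / 3) * Real.sqrt (d : ℝ)) := by
  induction d, hd using Nat.le_induction with
  | base =>
      rw [show Finset.Icc 2 2 = {2} from rfl, Finset.sum_singleton]
      rw [div_lt_iff₀ (by positivity)]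
      have h1 : (1:ℝ) < (2:ℝ) ^ ((1:ℝ)/4) * (2:ℝ) ^ ((3:ℝ)/4) := by
        rw [← Real.rpow_add (by norm_num)]
        norm_num
      nlinarith [Real.exp_pos (Real.pi * Real.sqrt (2 / 3) * Real.sqrt ((2:ℕ) : ℝ)),
        Real.rpow_pos_of_pos (show (0:ℝ) < 2 by norm_num) ((1:ℝ)/4),
        Real.rpow_pos_of_pos (show (0:ℝ) < 2 by norm_num) ((3:ℝ)/4)]
  | succ n hn ih =>
      rw [Finset.sum_Icc_succ_top (by omega)]
      have hkey := key_step (n : ℝ) (by exact_mod_cast hn)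
      push_cast
      push_cast at ih hkey
      linarith
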